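/- Let m≥1 be an integer, a₀>0, M≥a₀, and set τ₀=(M²/(2a₀)+M)^{−1}. Let 0<τ<τ₀, let h₀,…,h_{m-1}>0, and let a_i, b_i, c_i (i=0,…,m−1) be reals with a_i≥a₀, |b_i|≤M, |c_i|≤M. Suppose u₀,…,u_m∈ℝ satisfy ∑_{i=0}^{m-1} h_i·a_i·u_{ix}² + (1/τ)·∑_{i=0}^{m-1} h_i·u_i² = ∑_{i=0}^{m-1} h_i·(b_i·u_{ix}·u_i + c_i·u_i²), where u_{ix}=(u_{i+1}−u_i)/h_i. Then u_i=0 for all i=0,…,m. -/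

import Mathlib

lemma stmt10_nonneg (a₀ M a b c T x v : ℝ) (ha₀ : 0 < a₀) (ha : a₀ ≤ a)
    (hb : |b| ≤ M) (hc : |c| ≤ M) (hT : M^2 + 2*a₀*M < 2*a₀*T) :
    0 ≤ a*x^2 + T*v^2 - (b*x*v + c*v^2) := by
  obtain ⟨hb1, hb2⟩ := abs_le.mp hb
  obtain ⟨hc1, hc2⟩ := abs_le.mp hc
  have hb2sq : b^2 ≤ M^2 := sq_le_sq' hb1 hb2
  have h2a : (0:ℝ) < 2*a₀ := by linarith
  have h1 : 2*a₀*(b*x*v) ≤ a₀^2*x^2 + M^2*v^2 := by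
    nlinarith [sq_nonneg (a₀*x - b*v), mul_nonneg (sub_nonneg.2 hb2sq) (sq_nonneg v)]
  have p2 : 0 ≤ 2*a₀*(a - a₀)*x^2 :=
    mul_nonneg (mul_nonneg h2a.le (sub_nonneg.2 ha)) (sq_nonneg x)
  have p3 : 0 ≤ 2*a₀*(M - c)*v^2 :=
    mul_nonneg (mul_nonneg h2a.le (sub_nonneg.2 hc2)) (sq_nonneg v)
  have p4 : 0 ≤ (2*a₀*T - (M^2 + 2*a₀*M))*v^2 :=
    mul_nonneg (by linarith) (sq_nonneg v)
  have p5 : 0 ≤ a₀^2*x^2 := mul_nonneg (sq_nonneg a₀) (sq_nonneg x)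
  have key : 2*a₀*0 ≤ 2*a₀*(a*x^2 + T*v^2 - (b*x*v + c*v^2)) := by nlinarith
  exact le_of_mul_le_mul_left key h2a

lemma stmt10_zero (a₀ M a b c T x v : ℝ) (ha₀ : 0 < a₀) (ha : a₀ ≤ a)
    (hb : |b| ≤ M) (hc : |c| ≤ M) (hT : M^2 + 2*a₀*M < 2*a₀*T)
    (heq : a*x^2 + T*v^2 - (b*x*v + c*v^2) = 0) : x = 0 ∧ v = 0 := by
  obtain ⟨hb1, hb2⟩ := abs_le.mp hb
  obtain ⟨hc1, hc2⟩ := abs_le.mp hc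
  have hb2sq : b^2 ≤ M^2 := sq_le_sq' hb1 hb2
  have h2a : (0:ℝ) < 2*a₀ := by linarith
  have h1 : 2*a₀*(b*x*v) ≤ a₀^2*x^2 + M^2*v^2 := by
    nlinarith [sq_nonneg (a₀*x - b*v), mul_nonneg (sub_nonneg.2 hb2sq) (sq_nonneg v)]
  have p2 : 0 ≤ 2*a₀*(a - a₀)*x^2 :=
    mul_nonneg (mul_nonneg h2a.le (sub_nonneg.2 ha)) (sq_nonneg x)
  have p3 : 0 ≤ 2*a₀*(M - c)*v^2 :=
    mul_nonneg (mul_nonneg h2a.le (sub_nonneg.2 hc2)) (sq_nonneg v)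
  have p5 : 0 ≤ a₀^2*x^2 := mul_nonneg (sq_nonneg a₀) (sq_nonneg x)
  have hcoef : 0 < 2*a₀*T - (M^2 + 2*a₀*M) := by linarith
  have hequ : 2*a₀*(a*x^2 + T*v^2) = 2*a₀*(b*x*v + c*v^2) := by
    linear_combination 2*a₀*heq
  have hv2 : v^2 ≤ 0 := by nlinarith
  have hv : v = 0 :=
    pow_eq_zero_iff (n := 2) (by norm_num) |>.mp (le_antisymm hv2 (sq_nonneg v))
  subst hv
  have hx2 : a * x^2 = 0 := by linear_combination heq
  have : x^2 = 0 :=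
    (mul_eq_zero.mp hx2).resolve_left (ne_of_gt (lt_of_lt_of_le ha₀ ha))
  exact ⟨pow_eq_zero_iff (n := 2) (by norm_num) |>.mp this, rfl⟩

theorem stmt_10 (m : ℕ) (hm : 1 ≤ m) (a₀ M : ℝ) (ha₀ : 0 < a₀) (hM : a₀ ≤ M)
    (τ : ℝ) (hτ0 : 0 < τ) (hτ : τ < (M^2/(2*a₀) + M)⁻¹)
    (h a b c : ℕ → ℝ) (hh : ∀ i < m, 0 < h i)
    (ha : ∀ i < m, a₀ ≤ a i) (hb : ∀ i < m, |b i| ≤ M) (hc : ∀ i < m, |c i| ≤ M)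
    (u : ℕ → ℝ)
    (hid : ∑ i ∈ Finset.range m, h i * a i * ((u (i+1) - u i)/h i)^2
          + (1/τ) * ∑ i ∈ Finset.range m, h i * (u i)^2
        = ∑ i ∈ Finset.range m,
            h i * (b i * ((u (i+1) - u i)/h i) * u i + c i * (u i)^2)) :
    ∀ i ≤ m, u i = 0 := by
  have hMpos : 0 < M := lt_of_lt_of_le ha₀ hM
  have hK : 0 < M^2/(2*a₀) + M := by positivity
  -- 1/τ > K
  have hT : M^2 + 2*a₀*M < 2*a₀*(1/τ) := by
    have h1 : M^2/(2*a₀) + M < 1/τ := by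
      have h2 := mul_lt_mul_of_pos_left hτ hK
      rw [mul_inv_cancel₀ hK.ne'] at h2
      rw [lt_div_iff₀ hτ0]
      linarith [mul_comm (M^2/(2*a₀) + M) τ]
    have h2a : (0:ℝ) < 2*a₀ := by linarith
    have := mul_lt_mul_of_pos_left h1 h2a
    have he : 2*a₀*(M^2/(2*a₀) + M) = M^2 + 2*a₀*M := by field_simp
    linarith [he ▸ this]
  set T := 1/τ with hTdef
  set F : ℕ → ℝ := fun i =>
    h i * (a i * ((u (i+1) - u i)/h i)^2 + T * (u i)^2
      - (b i * ((u (i+1) - u i)/h i) * u i + c i * (u i)^2)) with hF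
  have hsum : ∑ i ∈ Finset.range m, F i = 0 := by
    have : ∑ i ∈ Finset.range m, F i
        = ∑ i ∈ Finset.range m, h i * a i * ((u (i+1) - u i)/h i)^2
          + (1/τ) * ∑ i ∈ Finset.range m, h i * (u i)^2
          - ∑ i ∈ Finset.range m,
              h i * (b i * ((u (i+1) - u i)/h i) * u i + c i * (u i)^2) := by
      rw [Finset.mul_sum, ← Finset.sum_add_distrib, ← Finset.sum_sub_distrib]
      refine Finset.sum_congr rfl fun i _ => by simp only [hF]; ring
    rw [this, hid]; ring
  have hFnn : ∀ i ∈ Finset.range m, 0 ≤ F i := by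
    intro i hi
    rw [Finset.mem_range] at hi
    exact mul_nonneg (hh i hi).le
      (stmt10_nonneg a₀ M (a i) (b i) (c i) T _ _ ha₀ (ha i hi) (hb i hi) (hc i hi) hT)
  have hFz : ∀ i ∈ Finset.range m, F i = 0 :=
    (Finset.sum_eq_zero_iff_of_nonneg hFnn).mp hsum
  have key : ∀ i < m, u i = 0 ∧ u (i+1) = u i := by
    intro i hi
    have hFi := hFz i (Finset.mem_range.mpr hi)
    have hhi := hh i hi
    have hinner : a i * ((u (i+1) - u i)/h i)^2 + T * (u i)^2
        - (b i * ((u (i+1) - u i)/h i) * u i + c i * (u i)^2) = 0 := by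
      rcases mul_eq_zero.mp hFi with h' | h'
      · exact absurd h' (ne_of_gt hhi)
      · exact h'
    obtain ⟨hx, hv⟩ := stmt10_zero a₀ M (a i) (b i) (c i) T _ _ ha₀ (ha i hi)
      (hb i hi) (hc i hi) hT hinner
    refine ⟨hv, ?_⟩
    have : u (i+1) - u i = 0 := by
      have := div_eq_zero_iff.mp hx
      rcases this with h' | h'
      · exact h'
      · exact absurd h' (ne_of_gt hhi)
    linarith
  intro i hi
  rcases lt_or_eq_of_le hi with hi' | rfl
  · exact (key i hi').1
  · obtain ⟨j, rfl⟩ : ∃ j, i = j + 1 := ⟨i - 1, (Nat.succ_pred_eq_of_pos hm).symm⟩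
    have hj : j < j + 1 := Nat.lt_succ_self j
    obtain ⟨h0, h1⟩ := key j hj
    rw [h1, h0]
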